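/- arXiv:2407.02923 — 2 statements merged into one kernel-verified Lean document; each statement's English description precedes it below -/
import Mathlib

section
/- Let n be a positive integer and let ρ be any n-qubit density matrix (a positive semidefinite complex 2ⁿ×2ⁿ matrix with trace 1). For a multi-index k : Fin n → Fin 6, let Π_k be the tensor product of the single-qubit Pauli POVM effects π_{k(1)}, …, π_{k(n)} and let D_k be the tensor product of the corresponding classical-shadow snapshots d_{k(1)}, …, d_{k(n)}. Then the second moment of the canonical classical-shadow estimator of the observable O = X^{⊗n} satisfies Σ_{k : Fin n → Fin 6} Tr[Π_k ρ] · (Tr[O · D_k])² = 3ⁿ. -/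
open Matrix
open scoped ComplexOrder

/-- Pauli `X`. -/
def PX : Matrix (Fin 2) (Fin 2) ℂ := !![0, 1; 1, 0]
/-- Pauli `Y`. -/
def PY : Matrix (Fin 2) (Fin 2) ℂ := !![0, -Complex.I; Complex.I, 0]
/-- Pauli `Z`. -/
def PZ : Matrix (Fin 2) (Fin 2) ℂ := !![1, 0; 0, -1]

/-- The six single-qubit Pauli POVM effects. -/
noncomputable def pauliPOVM : Fin 6 → Matrix (Fin 2) (Fin 2) ℂ :=
  ![(1 / 6 : ℂ) • (1 + PZ), (1 / 6 : ℂ) • (1 - PZ),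
    (1 / 6 : ℂ) • (1 + PX), (1 / 6 : ℂ) • (1 - PX),
    (1 / 6 : ℂ) • (1 + PY), (1 / 6 : ℂ) • (1 - PY)]

/-- The classical-shadow snapshots `(I ± 3P)/2`. -/
noncomputable def shadowDual : Fin 6 → Matrix (Fin 2) (Fin 2) ℂ :=
  ![(1 / 2 : ℂ) • (1 + (3 : ℂ) • PZ), (1 / 2 : ℂ) • (1 - (3 : ℂ) • PZ),
    (1 / 2 : ℂ) • (1 + (3 : ℂ) • PX), (1 / 2 : ℂ) • (1 - (3 : ℂ) • PX),
    (1 / 2 : ℂ) • (1 + (3 : ℂ) • PY), (1 / 2 : ℂ) • (1 - (3 : ℂ) • PY)]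

/-- The `n`-qubit tensor-product effect `Π_k = π_{k 1} ⊗ ⋯ ⊗ π_{k n}`. -/
noncomputable def povmN (n : ℕ) (k : Fin n → Fin 6) :
    Matrix (Fin n → Fin 2) (Fin n → Fin 2) ℂ :=
  Matrix.of fun s t => ∏ i, pauliPOVM (k i) (s i) (t i)

/-- The `n`-qubit tensor-product snapshot `D_k = d_{k 1} ⊗ ⋯ ⊗ d_{k n}`. -/
noncomputable def dualN (n : ℕ) (k : Fin n → Fin 6) :
    Matrix (Fin n → Fin 2) (Fin n → Fin 2) ℂ :=
  Matrix.of fun s t => ∏ i, shadowDual (k i) (s i) (t i)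

/-- The `n`-fold tensor power of a single-qubit matrix. -/
def tensorPow (n : ℕ) (P : Matrix (Fin 2) (Fin 2) ℂ) :
    Matrix (Fin n → Fin 2) (Fin n → Fin 2) ℂ :=
  Matrix.of fun s t => ∏ i, P (s i) (t i)

/-- Trace of a product of tensor products factorizes. -/
lemma trace_tensor_mul {n : ℕ} (A B : Fin n → Matrix (Fin 2) (Fin 2) ℂ) :
    ((Matrix.of fun (s t : Fin n → Fin 2) => ∏ i, A i (s i) (t i)) *
      (Matrix.of fun (s t : Fin n → Fin 2) => ∏ i, B i (s i) (t i))).trace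
      = ∏ i, (A i * B i).trace := by
  have h : ∀ i, (A i * B i).trace = ∑ p : Fin 2 × Fin 2, A i p.1 p.2 * B i p.2 p.1 := by
    intro i
    simp [Matrix.trace, Matrix.diag, Matrix.mul_apply, Fintype.sum_prod_type]
  simp only [h, Fintype.prod_sum]
  rw [Matrix.trace]
  simp only [Matrix.diag, Matrix.mul_apply, Matrix.of_apply, ← Finset.prod_mul_distrib]
  rw [← Fintype.sum_prod_type']
  exact Fintype.sum_equiv (Equiv.arrowProdEquivProdArrow (Fin n) (fun _ => Fin 2) (fun _ => Fin 2)).symm _ _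
    (fun x => by simp [Equiv.arrowProdEquivProdArrow])

lemma single_trace_sq (j : Fin 6) :
    (PX * shadowDual j).trace ^ 2 = (if j = 2 ∨ j = 3 then 9 else 0 : ℂ) := by
  fin_cases j <;>
    · first
      | rw [if_pos (by decide)]
      | rw [if_neg (by decide)]
      simp only [shadowDual, PX, PY, PZ, Matrix.one_fin_two, Matrix.trace, Matrix.diag,
        Matrix.mul_apply, Fin.sum_univ_two]
      norm_num [Matrix.smul_apply]
      try ring_nf

lemma single_sum (a b : Fin 2) :
    ∑ j : Fin 6, (if j = 2 ∨ j = 3 then 9 else 0 : ℂ) * pauliPOVM j a b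
      = if a = b then 3 else 0 := by
  rw [Fin.sum_univ_six]
  norm_num
  fin_cases a <;> fin_cases b <;>
    simp [pauliPOVM, PX, Matrix.one_fin_two] <;> norm_num

/-- For any `n`-qubit density matrix `ρ`, the second moment of the canonical
classical-shadow estimator of the global observable `O = X^{⊗n}` equals `3ⁿ`:
`∑ₖ Tr[Π_k ρ] · (Tr[O·D_k])² = 3ⁿ`. -/
theorem shadow_second_moment_global_X {n : ℕ} (hn : 0 < n)
    (ρ : Matrix (Fin n → Fin 2) (Fin n → Fin 2) ℂ)
    (hρ : ρ.PosSemidef) (htr : ρ.trace = 1) :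
    ∑ k : Fin n → Fin 6,
        (povmN n k * ρ).trace * ((tensorPow n PX * dualN n k).trace) ^ 2 =
      (3 : ℂ) ^ n := by
  have hdual : ∀ k : Fin n → Fin 6, ((tensorPow n PX * dualN n k).trace) ^ 2
      = ∏ i, (if k i = 2 ∨ k i = 3 then 9 else 0 : ℂ) := by
    intro k
    have h := trace_tensor_mul (fun _ : Fin n => PX) (fun i => shadowDual (k i))
    have : (tensorPow n PX * dualN n k).trace = ∏ i, (PX * shadowDual (k i)).trace := h
    rw [this, ← Finset.prod_pow]
    exact Finset.prod_congr rfl fun i _ => single_trace_sq (k i)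
  have htrρ : ∀ k : Fin n → Fin 6, (povmN n k * ρ).trace
      = ∑ s : Fin n → Fin 2, ∑ t : Fin n → Fin 2,
          (∏ i, pauliPOVM (k i) (s i) (t i)) * ρ t s := by
    intro k
    simp [Matrix.trace, Matrix.diag, Matrix.mul_apply, povmN]
  calc ∑ k : Fin n → Fin 6,
        (povmN n k * ρ).trace * ((tensorPow n PX * dualN n k).trace) ^ 2
      = ∑ s : Fin n → Fin 2, ∑ t : Fin n → Fin 2,
          (∑ k : Fin n → Fin 6,
            ∏ i, (if k i = 2 ∨ k i = 3 then (9:ℂ) else 0) * pauliPOVM (k i) (s i) (t i))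
            * ρ t s := by
        simp only [hdual, htrρ, Finset.sum_mul]
        rw [Finset.sum_comm]
        refine Finset.sum_congr rfl fun s _ => ?_
        rw [Finset.sum_comm]
        refine Finset.sum_congr rfl fun t _ => ?_
        refine Finset.sum_congr rfl fun k _ => ?_
        rw [Finset.prod_mul_distrib]
        ring
    _ = ∑ s : Fin n → Fin 2, ∑ t : Fin n → Fin 2,
          (∏ i, (if s i = t i then (3:ℂ) else 0)) * ρ t s := by
        refine Finset.sum_congr rfl fun s _ => Finset.sum_congr rfl fun t _ => ?_
        congr 1
        rw [show (∑ k : Fin n → Fin 6,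
              ∏ i, (if k i = 2 ∨ k i = 3 then (9:ℂ) else 0) * pauliPOVM (k i) (s i) (t i))
            = ∏ i, ∑ j : Fin 6, (if j = 2 ∨ j = 3 then (9:ℂ) else 0) * pauliPOVM j (s i) (t i)
          from (Fintype.prod_sum fun i j =>
            (if j = 2 ∨ j = 3 then (9:ℂ) else 0) * pauliPOVM j (s i) (t i)).symm]
        exact Finset.prod_congr rfl fun i _ => single_sum (s i) (t i)
    _ = ∑ s : Fin n → Fin 2, (3:ℂ) ^ n * ρ s s := by
        refine Finset.sum_congr rfl fun s _ => ?_
        rw [Finset.sum_eq_single s]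
        · simp
        · intro t _ hts
          have : ∃ i, s i ≠ t i := by
            by_contra h
            push_neg at h
            exact hts (funext fun i => (h i).symm)
          obtain ⟨i, hi⟩ := this
          rw [Finset.prod_eq_zero (Finset.mem_univ i) (by simp [hi]), zero_mul]
        · intro h; exact absurd (Finset.mem_univ s) h
    _ = (3:ℂ) ^ n := by
        rw [← Finset.mul_sum]
        have : ∑ s : Fin n → Fin 2, ρ s s = ρ.trace := rfl
        rw [this, htr, mul_one]
end

section
/- Let n be a positive integer. For a multi-index k : Fin n → Fin 6, let Π_k be the tensor product of the single-qubit Pauli POVM effects π_{k(1)}, …, π_{k(n)} and let D_k be the tensor product of the corresponding classical-shadow snapshots d_{k(1)}, …, d_{k(n)}. Then for every complex 2ⁿ×2ⁿ matrix A, A = Σ_{k : Fin n → Fin 6} Tr[A·D_k] · Π_k; i.e. the tensor-product snapshots form a dual frame to the n-qubit tensor-product Pauli-6 POVM, giving an unbiased reconstruction of every n-qubit operator. -/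
open Matrix

/-- Index-5 evaluation of a 6-vector, as a simp lemma. -/
@[simp] lemma vec6_five {α : Type*} (a b c d e f : α) : ![a,b,c,d,e,f] 5 = f := rfl

/-- Explicit entries of the POVM effects. -/
lemma pauli_eq : pauliPOVM = ![
    !![1/3, 0; 0, 0], !![0, 0; 0, 1/3],
    !![1/6, 1/6; 1/6, 1/6], !![1/6, -1/6; -1/6, 1/6],
    !![1/6, -Complex.I/6; Complex.I/6, 1/6], !![1/6, Complex.I/6; -Complex.I/6, 1/6]] := by
  funext j
  fin_cases j <;> · ext i l; fin_cases i <;> fin_cases l <;>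
    simp [pauliPOVM, PX, PY, PZ, Matrix.one_apply] <;> ring

/-- Explicit entries of the shadow snapshots. -/
lemma shadow_eq : shadowDual = ![
    !![2, 0; 0, -1], !![-1, 0; 0, 2],
    !![1/2, 3/2; 3/2, 1/2], !![1/2, -3/2; -3/2, 1/2],
    !![1/2, -3*Complex.I/2; 3*Complex.I/2, 1/2], !![1/2, 3*Complex.I/2; -3*Complex.I/2, 1/2]] := by
  funext j
  fin_cases j <;> · ext i l; fin_cases i <;> fin_cases l <;>
    simp [shadowDual, PX, PY, PZ, Matrix.one_apply] <;> ring

/-- The single-qubit dual-frame identity, entrywise. -/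
lemma single_dual (s t u v : Fin 2) :
    ∑ j : Fin 6, shadowDual j v u * pauliPOVM j s t
      = if u = s ∧ v = t then 1 else 0 := by
  rw [pauli_eq, shadow_eq]
  fin_cases s <;> fin_cases t <;> fin_cases u <;> fin_cases v <;>
    · rw [Fin.sum_univ_six]
      norm_num [Fin.ext_iff]
      all_goals ring_nf
      all_goals simp [Complex.I_sq]
      all_goals ring_nf
      all_goals (rw [Complex.I_sq]; norm_num)

/-- The `n`-qubit dual-frame identity, entrywise. -/
lemma key_dual {n : ℕ} (s t u v : Fin n → Fin 2) :
    (∑ k : Fin n → Fin 6,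
        (∏ i, shadowDual (k i) (v i) (u i)) * ∏ i, pauliPOVM (k i) (s i) (t i))
      = if u = s ∧ v = t then 1 else 0 := by
  calc (∑ k : Fin n → Fin 6,
        (∏ i, shadowDual (k i) (v i) (u i)) * ∏ i, pauliPOVM (k i) (s i) (t i))
      = ∑ k : Fin n → Fin 6,
          ∏ i, (shadowDual (k i) (v i) (u i) * pauliPOVM (k i) (s i) (t i)) := by
        simp [Finset.prod_mul_distrib]
    _ = ∏ i, ∑ j : Fin 6, shadowDual j (v i) (u i) * pauliPOVM j (s i) (t i) :=
        (Fintype.prod_sum fun i (j : Fin 6) =>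
          shadowDual j (v i) (u i) * pauliPOVM j (s i) (t i)).symm
    _ = ∏ i, if u i = s i ∧ v i = t i then 1 else 0 := by
        simp_rw [single_dual]
    _ = if u = s ∧ v = t then 1 else 0 := by
        by_cases h : u = s ∧ v = t
        · obtain ⟨h1, h2⟩ := h
          subst h1; subst h2; simp
        · rw [if_neg h]
          have : ¬ ∀ i, u i = s i ∧ v i = t i := by
            intro hall
            exact h ⟨funext fun i => (hall i).1, funext fun i => (hall i).2⟩
          push_neg at this
          obtain ⟨i, hi⟩ := this
          exact Finset.prod_eq_zero (Finset.mem_univ i) (by rw [if_neg (by tauto)])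

lemma trace_formula {n : ℕ} (A : Matrix (Fin n → Fin 2) (Fin n → Fin 2) ℂ)
    (k : Fin n → Fin 6) :
    (A * dualN n k).trace = ∑ u, ∑ v, A u v * ∏ i, shadowDual (k i) (v i) (u i) := by
  simp [Matrix.trace, Matrix.mul_apply, dualN, Matrix.diag]

/-- The tensor-product classical-shadow snapshots form a dual frame to the
`n`-qubit tensor-product Pauli-6 POVM: every `n`-qubit operator `A` satisfies
`A = ∑ₖ Tr[A·D_k] · Π_k`, giving an unbiased reconstruction. -/
theorem tensor_shadow_dual_frame {n : ℕ} (hn : 0 < n)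
    (A : Matrix (Fin n → Fin 2) (Fin n → Fin 2) ℂ) :
    A = ∑ k : Fin n → Fin 6, (A * dualN n k).trace • povmN n k := by
  ext s t
  rw [Matrix.sum_apply]
  symm
  calc (∑ k : Fin n → Fin 6, ((A * dualN n k).trace • povmN n k) s t)
      = ∑ k : Fin n → Fin 6, ∑ u, ∑ v,
          A u v * ((∏ i, shadowDual (k i) (v i) (u i)) * ∏ i, pauliPOVM (k i) (s i) (t i)) := by
        simp_rw [Matrix.smul_apply, trace_formula, smul_eq_mul, povmN, Matrix.of_apply,
          Finset.sum_mul, mul_assoc]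
    _ = ∑ u, ∑ v, A u v * ∑ k : Fin n → Fin 6,
          (∏ i, shadowDual (k i) (v i) (u i)) * ∏ i, pauliPOVM (k i) (s i) (t i) := by
        rw [Finset.sum_comm]
        refine Finset.sum_congr rfl fun u _ => ?_
        rw [Finset.sum_comm]
        refine Finset.sum_congr rfl fun v _ => ?_
        rw [Finset.mul_sum]
    _ = ∑ u, ∑ v, A u v * if u = s ∧ v = t then 1 else 0 := by
        simp_rw [key_dual]
    _ = A s t := by
        simp [ite_and, mul_ite, Finset.sum_ite_eq', Finset.sum_ite_eq]
end
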